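/- Let n ≥ 1, k ∈ {1,…,n}, let 1 = c_1 < c_2 < ⋯ < c_k ≤ n and o_1, …, o_k ≥ 1 with o_1 + ⋯ + o_k = n and c_i ≤ o_1 + ⋯ + o_{i−1} + 1 for 2 ≤ i ≤ k. Then the number of parking functions of length n whose multiset of entries consists of c_i with multiplicity o_i for each i ∈ [k] equals the multinomial coefficient n!/(o_1!⋯o_k!), and this also equals the number of pairs (w, A) where w is a permutation of [n] and A is an antichain of Q_w that is the arc set of a nonnesting partition of [n] with exactly k blocks whose block minima are c_1, …, c_k and whose block with minimum c_i has cardinality o_i for each i. -/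

import Mathlib

/-- `a : Fin n → ℕ` is a parking function of length `n`. -/
def IsParkingFunction (n : ℕ) (a : Fin n → ℕ) : Prop :=
  (∀ i, a i ∈ Finset.Icc 1 n) ∧
    ∃ g : Equiv.Perm (Fin n), Monotone (fun i => a (g i)) ∧ ∀ i : Fin n, a (g i) ≤ (i : ℕ) + 1

/-- `i` and `j` lie in the same block of the set partition `π` of `[n]`. -/
def SameBlock {n : ℕ} (π : Finpartition (Finset.univ : Finset (Fin n)))
    (i j : Fin n) : Prop :=
  ∃ B ∈ π.parts, i ∈ B ∧ j ∈ B

/-- `(i,j)` is an arc of the set partition `π`. -/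
def IsArc {n : ℕ} (π : Finpartition (Finset.univ : Finset (Fin n)))
    (i j : Fin n) : Prop :=
  i < j ∧ SameBlock π i j ∧ ∀ k : Fin n, SameBlock π i k → ¬(i < k ∧ k < j)

/-- The set partition `π` is nonnesting. -/
def IsNonnesting {n : ℕ} (π : Finpartition (Finset.univ : Finset (Fin n))) : Prop :=
  ∀ i j r s : Fin n, IsArc π i j → IsArc π r s → r ≤ i → j ≤ s → i = r ∧ j = s

/-- The partial order of the poset `Q_w`: `(i,j) ≤ (r,s)` iff `r ≤ i` and `j ≤ s`. -/
def QwLe {n : ℕ} (p q : Fin n × Fin n) : Prop :=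
  q.1 ≤ p.1 ∧ p.2 ≤ q.2

/-- `A` is an antichain of the poset `Q_w = {(i,j) : i < j, w(i) < w(j)}`. -/
def IsAntichainQw (n : ℕ) (w : Equiv.Perm (Fin n)) (A : Set (Fin n × Fin n)) : Prop :=
  (∀ p ∈ A, p.1 < p.2 ∧ w p.1 < w p.2) ∧
    ∀ p ∈ A, ∀ q ∈ A, p ≠ q → ¬QwLe p q ∧ ¬QwLe q p


namespace PFAux
open Finset

variable {k : ℕ}

variable (hk : 0 < k) (c o : Fin k → ℕ)

/-- pending positions in a label list -/
def pends (o : Fin k → ℕ) (d : Fin k) (L : List (Fin k)) : Finset ℕ :=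
  (Finset.range L.length).filter fun q =>
    (∀ r ∈ Finset.range L.length, q < r → L.getD r d ≠ L.getD q d) ∧
      L.count (L.getD q d) < o (L.getD q d)

noncomputable def next (hk : 0 < k) (c o : Fin k → ℕ) (L : List (Fin k)) : Fin k :=
  if h : ∃ i, c i = L.length + 1 then h.choose
  else if h2 : (pends o ⟨0, hk⟩ L).Nonempty then L.getD ((pends o ⟨0, hk⟩ L).min' h2) ⟨0, hk⟩
  else ⟨0, hk⟩

noncomputable def labels (hk : 0 < k) (c o : Fin k → ℕ) : ℕ → List (Fin k) :=
  fun p => Nat.rec [] (fun _ L => L ++ [next hk c o L]) p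

@[simp] lemma labels_zero : labels hk c o 0 = [] := rfl

lemma labels_succ (p : ℕ) :
    labels hk c o (p + 1) = labels hk c o p ++ [next hk c o (labels hk c o p)] := rfl

noncomputable def lab (hk : 0 < k) (c o : Fin k → ℕ) (p : ℕ) : Fin k := next hk c o (labels hk c o p)

lemma labels_length (p : ℕ) : (labels hk c o p).length = p := by
  induction p with
  | zero => rfl
  | succ p ih => simp [labels_succ, ih]

lemma labels_eq (p : ℕ) : labels hk c o p = (List.range p).map (lab hk c o) := by
  induction p with
  | zero => rfl
  | succ p ih =>
      rw [labels_succ hk c o, List.range_succ, List.map_append]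
      exact congrArg₂ _ ih rfl

lemma labels_getD {q p : ℕ} (hq : q < p) (d : Fin k) :
    (labels hk c o p).getD q d = lab hk c o q := by
  rw [labels_eq]
  rw [List.getD_eq_getElem?_getD, List.getElem?_map]
  simp [List.getElem?_range hq]

/-- number of positions `< p` with label `i` -/
noncomputable def cnt (p : ℕ) (i : Fin k) : ℕ := #((Finset.range p).filter fun q => lab hk c o q = i)

lemma cnt_zero (i : Fin k) : cnt hk c o 0 i = 0 := by simp [cnt]

lemma cnt_succ (p : ℕ) (i : Fin k) :
    cnt hk c o (p + 1) i = cnt hk c o p i + if lab hk c o p = i then 1 else 0 := by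
  unfold cnt
  rw [Finset.range_add_one, Finset.filter_insert]
  by_cases h : lab hk c o p = i
  · rw [if_pos h, if_pos h, Finset.card_insert_of_notMem (by simp)]
  · rw [if_neg h, if_neg h, Nat.add_zero]

lemma cnt_mono (i : Fin k) : Monotone (fun p => cnt hk c o p i) := by
  intro a b hab
  exact Finset.card_le_card (Finset.filter_subset_filter _ (by simpa using hab))

lemma labels_count (p : ℕ) (i : Fin k) : (labels hk c o p).count i = cnt hk c o p i := by
  induction p with
  | zero => simp [cnt_zero]
  | succ p ih =>
      rw [labels_succ hk c o, cnt_succ, List.count_append, ih]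
      rcases eq_or_ne (lab hk c o p) i with h|h
      · simp only [List.count_cons, List.count_nil, if_pos h, beq_iff_eq]
        simp [h]
        exact h
      · simp only [List.count_cons, List.count_nil, beq_iff_eq]
        simp [h]
        exact h

lemma sum_cnt (p : ℕ) : ∑ i, cnt hk c o p i = p := by
  unfold cnt
  rw [← Finset.card_eq_sum_card_fiberwise (fun x _ => Finset.mem_univ (lab hk c o x))]
  exact Finset.card_range p

/-- `q` is pending at time `p` (ℕ-level description). -/
def Pend (p q : ℕ) : Prop :=
  q < p ∧ (∀ r, q < r → r < p → lab hk c o r ≠ lab hk c o q) ∧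
    cnt hk c o p (lab hk c o q) < o (lab hk c o q)

lemma mem_pends_iff {p q : ℕ} :
    q ∈ pends o ⟨0, hk⟩ (labels hk c o p) ↔ Pend hk c o p q := by
  unfold pends Pend
  simp only [Finset.mem_filter, Finset.mem_range, labels_length]
  constructor
  · rintro ⟨hq, h1, h2⟩
    rw [labels_getD hk c o hq] at h1 h2
    rw [labels_count] at h2
    exact ⟨hq, fun r hqr hrp => by
      have := h1 r hrp hqr
      rwa [labels_getD hk c o hrp] at this, h2⟩
  · rintro ⟨hq, h1, h2⟩
    refine ⟨hq, fun r hrp hqr => ?_, ?_⟩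
    · rw [labels_getD hk c o hrp, labels_getD hk c o hq]
      exact h1 r hqr hrp
    · rw [labels_getD hk c o hq, labels_count]
      exact h2

lemma lab_min {p : ℕ} {i : Fin k} (hcinj : Function.Injective c) (h : c i = p + 1) :
    lab hk c o p = i := by
  have hex : ∃ j, c j = (labels hk c o p).length + 1 := ⟨i, by rw [labels_length]; exact h⟩
  have : lab hk c o p = hex.choose := by
    unfold lab next
    rw [dif_pos hex]
  rw [this]
  apply hcinj
  rw [hex.choose_spec, labels_length, h]

lemma lab_step {p : ℕ} (h1 : ¬∃ i, c i = p + 1)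
    (h2 : (pends o ⟨0, hk⟩ (labels hk c o p)).Nonempty) :
    ∃ q, Pend hk c o p q ∧ lab hk c o p = lab hk c o q ∧
      ∀ q', Pend hk c o p q' → q ≤ q' := by
  set P := pends o ⟨0, hk⟩ (labels hk c o p) with hP
  refine ⟨P.min' h2, ?_, ?_, ?_⟩
  · exact (mem_pends_iff hk c o).mp (P.min'_mem h2)
  · have h1' : ¬∃ i, c i = (labels hk c o p).length + 1 := by rwa [labels_length]
    have hlt : P.min' h2 < p := ((mem_pends_iff hk c o).mp (P.min'_mem h2)).1
    show next hk c o (labels hk c o p) = _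
    unfold next
    rw [dif_neg h1', dif_pos h2, labels_getD hk c o hlt]
  · intro q' hq'
    exact P.min'_le _ ((mem_pends_iff hk c o).mpr hq')

/-- Bundle of the hypotheses of the main theorem. -/
structure Hyp (n k : ℕ) (c o : Fin k → ℕ) : Prop where
  hn : 1 ≤ n
  hk : 0 < k
  hc1 : c ⟨0, hk⟩ = 1
  hc : StrictMono c
  hcn : ∀ i, c i ≤ n
  ho : ∀ i, 1 ≤ o i
  hsum : ∑ i, o i = n
  hco : ∀ i : Fin k, 0 < (i : ℕ) →
    c i ≤ (∑ j ∈ Finset.univ.filter fun j => j < i, o j) + 1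

variable {n : ℕ} {c o}

lemma Hyp.c_pos (H : Hyp n k c o) (i : Fin k) : 1 ≤ c i := by
  rw [← H.hc1]
  exact H.hc.monotone (by simp [Fin.le_def])

lemma Hyp.cinj (H : Hyp n k c o) : Function.Injective c := H.hc.injective

lemma cnt_pos_of_lab {p q : ℕ} (hq : q < p) {i : Fin k} (h : lab hk c o q = i) :
    0 < cnt hk c o p i := by
  unfold cnt
  rw [Finset.card_pos]
  exact ⟨q, Finset.mem_filter.mpr ⟨Finset.mem_range.mpr hq, h⟩⟩

lemma pends_nonempty_aux (H : Hyp n k c o) {p : ℕ} (hp : p < n)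
    (hmin : ¬∃ i, c i = p + 1)
    (A1 : ∀ i, cnt H.hk c o p i ≤ o i)
    (A2 : ∀ i, 0 < cnt H.hk c o p i ↔ c i ≤ p) :
    (pends o ⟨0, H.hk⟩ (labels H.hk c o p)).Nonempty := by
  by_contra h
  rw [Finset.not_nonempty_iff_eq_empty] at h
  have hfull : ∀ i, 0 < cnt H.hk c o p i → o i ≤ cnt H.hk c o p i := by
    intro i hi
    by_contra hlt
    push_neg at hlt
    have hne : (((Finset.range p).filter fun q => lab H.hk c o q = i)).Nonempty := by
      rw [← Finset.card_pos]; exact hi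
    set q := (((Finset.range p).filter fun q => lab H.hk c o q = i)).max' hne with hqdef
    have hqmem := (((Finset.range p).filter fun q => lab H.hk c o q = i)).max'_mem hne
    rw [Finset.mem_filter, Finset.mem_range] at hqmem
    have : q ∈ pends o ⟨0, H.hk⟩ (labels H.hk c o p) := by
      rw [mem_pends_iff]
      refine ⟨hqmem.1, ?_, ?_⟩
      · intro r hqr hrp hlr
        have : r ≤ q := Finset.le_max' _ r (Finset.mem_filter.mpr
          ⟨Finset.mem_range.mpr hrp, by rw [hlr, hqmem.2]⟩)
        omega
      · rw [hqmem.2]; exact hlt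
    rw [h] at this
    exact absurd this (Finset.notMem_empty q)
  have hsum' : p = ∑ i ∈ Finset.univ.filter (fun i => c i ≤ p), o i := by
    conv_lhs => rw [← sum_cnt H.hk c o p]
    rw [← Finset.sum_filter_add_sum_filter_not Finset.univ (fun i => c i ≤ p)
        (cnt H.hk c o p)]
    have h2 : ∑ i ∈ Finset.univ.filter (fun i => ¬ c i ≤ p), cnt H.hk c o p i = 0 := by
      apply Finset.sum_eq_zero
      intro i hi
      rw [Finset.mem_filter] at hi
      by_contra hne
      exact hi.2 ((A2 i).mp (Nat.pos_of_ne_zero hne))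
    rw [h2, add_zero]
    apply Finset.sum_congr rfl
    intro i hi
    rw [Finset.mem_filter] at hi
    exact le_antisymm (A1 i) (hfull i ((A2 i).mpr hi.2))
  have hex : (Finset.univ.filter fun i : Fin k => p < c i).Nonempty := by
    by_contra hno
    rw [Finset.not_nonempty_iff_eq_empty, Finset.filter_eq_empty_iff] at hno
    push_neg at hno
    have : Finset.univ.filter (fun i : Fin k => c i ≤ p) = Finset.univ := by
      apply Finset.filter_true_of_mem
      intro i hi; exact hno hi
    rw [this, H.hsum] at hsum'
    omega
  set j := (Finset.univ.filter fun i : Fin k => p < c i).min' hex with hjdef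
  have hjmem := (Finset.univ.filter fun i : Fin k => p < c i).min'_mem hex
  rw [Finset.mem_filter] at hjmem
  have hj : p < c j := hjmem.2
  have hjpos : 0 < (j : ℕ) := by
    rcases Nat.eq_zero_or_pos (j : ℕ) with h0 | h0
    · exfalso
      have : j = ⟨0, H.hk⟩ := Fin.ext h0
      rw [this, H.hc1] at hj
      have hp0 : p = 0 := by omega
      exact hmin ⟨⟨0, H.hk⟩, by rw [H.hc1, hp0]⟩
    · exact h0
  have hset : Finset.univ.filter (fun i : Fin k => c i ≤ p)
      = Finset.univ.filter (fun i : Fin k => i < j) := by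
    ext i
    simp only [Finset.mem_filter, Finset.mem_univ, true_and]
    constructor
    · intro hi
      by_contra hij
      push_neg at hij
      exact absurd (le_trans (H.hc.monotone hij) hi) (not_le.mpr hj)
    · intro hij
      by_contra hip
      push_neg at hip
      exact absurd (Finset.min'_le _ i (Finset.mem_filter.mpr ⟨Finset.mem_univ i, hip⟩))
        (not_le.mpr hij)
  have hthis := H.hco j hjpos
  rw [← hset, ← hsum'] at hthis
  exact hmin ⟨j, by omega⟩

theorem inv (H : Hyp n k c o) : ∀ p, p ≤ n →
    (∀ i, cnt H.hk c o p i ≤ o i) ∧ (∀ i, 0 < cnt H.hk c o p i ↔ c i ≤ p) := by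
  intro p
  induction p with
  | zero =>
      intro _
      refine ⟨fun i => by simp [cnt_zero], fun i => ?_⟩
      simp only [cnt_zero]
      constructor
      · omega
      · intro h; have := H.c_pos i; omega
  | succ p ih =>
      intro hp
      have hp' : p ≤ n := Nat.le_of_succ_le hp
      have hpn : p < n := hp
      obtain ⟨A1, A2⟩ := ih hp'
      by_cases hmin : ∃ i, c i = p + 1
      · obtain ⟨i0, hi0⟩ := hmin
        have hlab : lab H.hk c o p = i0 := lab_min H.hk c o H.cinj hi0
        have hcnt0 : cnt H.hk c o p i0 = 0 := by
          by_contra hne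
          have := (A2 i0).mp (Nat.pos_of_ne_zero hne)
          omega
        constructor
        · intro i
          rw [cnt_succ]
          by_cases hji : lab H.hk c o p = i
          · have hii : i = i0 := by rw [← hji, hlab]
            rw [if_pos hji, hii, hcnt0]
            exact H.ho i0
          · rw [if_neg hji, add_zero]; exact A1 i
        · intro i
          rw [cnt_succ]
          constructor
          · intro hpos
            by_cases hji : lab H.hk c o p = i
            · have hii : i = i0 := by rw [← hji, hlab]
              rw [hii, hi0]
            · rw [if_neg hji, add_zero] at hpos
              exact le_trans ((A2 i).mp hpos) (Nat.le_succ p)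
          · intro hle
            rcases Nat.lt_succ_iff_lt_or_eq.mp (Nat.lt_succ_of_le hle) with h | h
            · have := (A2 i).mpr (Nat.lt_succ_iff.mp h)
              split <;> omega
            · have hii : i = i0 := H.cinj (by rw [h, hi0])
              rw [hii, if_pos hlab]
              omega
      · have hne := pends_nonempty_aux H hpn hmin A1 A2
        obtain ⟨q, ⟨hqp, hlast, hcnt⟩, hlabq, -⟩ := lab_step H.hk c o hmin hne
        constructor
        · intro i
          rw [cnt_succ]
          by_cases hji : lab H.hk c o p = i
          · have hqi : lab H.hk c o q = i := by rw [← hlabq, hji]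
            rw [if_pos hji, ← hqi]
            omega
          · rw [if_neg hji, add_zero]; exact A1 i
        · intro i
          rw [cnt_succ]
          constructor
          · intro hpos
            by_cases hji : lab H.hk c o p = i
            · have hqi : lab H.hk c o q = i := by rw [← hlabq, hji]
              have := (A2 i).mp (cnt_pos_of_lab H.hk hqp hqi)
              omega
            · rw [if_neg hji, add_zero] at hpos
              exact le_trans ((A2 i).mp hpos) (Nat.le_succ p)
          · intro hle
            have hcip : c i ≤ p := by
              rcases Nat.lt_succ_iff_lt_or_eq.mp (Nat.lt_succ_of_le hle) with h | h
              · exact Nat.lt_succ_iff.mp h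
              · exact absurd ⟨i, h⟩ hmin
            have := (A2 i).mpr hcip
            split <;> omega

lemma cnt_le (H : Hyp n k c o) {p : ℕ} (hp : p ≤ n) (i : Fin k) :
    cnt H.hk c o p i ≤ o i := (inv H p hp).1 i

lemma cnt_pos_iff (H : Hyp n k c o) {p : ℕ} (hp : p ≤ n) (i : Fin k) :
    0 < cnt H.hk c o p i ↔ c i ≤ p := (inv H p hp).2 i

lemma cnt_n (H : Hyp n k c o) (i : Fin k) : cnt H.hk c o n i = o i := by
  have hall : ∀ j ∈ Finset.univ, cnt H.hk c o n j ≤ o j := fun j _ => cnt_le H le_rfl j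
  have hs : ∑ j, cnt H.hk c o n j = ∑ j, o j := by rw [sum_cnt, H.hsum]
  exact (Finset.sum_eq_sum_iff_of_le hall).mp hs i (Finset.mem_univ i)

lemma lab_c_le (H : Hyp n k c o) {q : ℕ} (hq : q < n) : c (lab H.hk c o q) ≤ q + 1 := by
  have h1 : 0 < cnt H.hk c o (q + 1) (lab H.hk c o q) :=
    cnt_pos_of_lab H.hk (Nat.lt_succ_self q) rfl
  exact (cnt_pos_iff H (Nat.succ_le_of_lt hq) _).mp h1

lemma step (H : Hyp n k c o) {p : ℕ} (hp : p < n) (hmin : ¬∃ i, c i = p + 1) :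
    ∃ q, Pend H.hk c o p q ∧ lab H.hk c o p = lab H.hk c o q ∧
      ∀ q', Pend H.hk c o p q' → q ≤ q' :=
  lab_step H.hk c o hmin
    (pends_nonempty_aux H hp hmin (inv H p hp.le).1 (inv H p hp.le).2)

lemma lab_of_c (H : Hyp n k c o) (i : Fin k) : lab H.hk c o (c i - 1) = i := by
  apply lab_min H.hk c o H.cinj
  have := H.c_pos i
  omega

/-- ℕ-level arc relation for the canonical labeling. -/
def Arc (hk : 0 < k) (c o : Fin k → ℕ) (x y : ℕ) : Prop :=
  x < y ∧ lab hk c o x = lab hk c o y ∧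
    ∀ z, lab hk c o z = lab hk c o x → ¬(x < z ∧ z < y)

lemma arc_nonmin (H : Hyp n k c o) {x y : ℕ} (hy : y < n) (h : Arc H.hk c o x y) :
    ¬∃ i, c i = y + 1 := by
  rintro ⟨i, hi⟩
  have hlaby : lab H.hk c o y = i := lab_min H.hk c o H.cinj hi
  have hpos : 0 < cnt H.hk c o y i :=
    cnt_pos_of_lab H.hk h.1 (by rw [h.2.1, hlaby])
  have := (cnt_pos_iff H hy.le i).mp hpos
  omega

lemma arc_eq_min (H : Hyp n k c o) {x y : ℕ} (hy : y < n) (h : Arc H.hk c o x y) :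
    Pend H.hk c o y x ∧ ∀ q', Pend H.hk c o y q' → x ≤ q' := by
  obtain ⟨q, hq, hlabq, hqmin⟩ := step H hy (arc_nonmin H hy h)
  have hxq : x = q := by
    rcases lt_trichotomy x q with hlt | heq | hgt
    · exact absurd ⟨hlt, hq.1⟩ (h.2.2 q (by rw [← hlabq, ← h.2.1]))
    · exact heq
    · exact absurd (show lab H.hk c o x = lab H.hk c o q from by rw [h.2.1, hlabq])
        (hq.2.1 x hgt h.1)
  rw [hxq]
  exact ⟨hq, hqmin⟩

lemma arc_exists (H : Hyp n k c o) {y : ℕ} (hy : y < n) (hmin : ¬∃ i, c i = y + 1) :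
    ∃ x, Arc H.hk c o x y := by
  obtain ⟨q, hq, hlabq, -⟩ := step H hy hmin
  exact ⟨q, hq.1, hlabq.symm, fun z hz hzq => hq.2.1 z hzq.1 hzq.2 hz⟩

lemma nonnesting_N (H : Hyp n k c o) {q j r s : ℕ} (hj : j < n) (hs : s < n)
    (h1 : Arc H.hk c o q j) (h2 : Arc H.hk c o r s) (hrq : r ≤ q) (hjs : j ≤ s) :
    q = r ∧ j = s := by
  rcases eq_or_lt_of_le hjs with heq | hlt
  · subst heq
    obtain ⟨hp1, hm1⟩ := arc_eq_min H hj h1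
    obtain ⟨hp2, hm2⟩ := arc_eq_min H hj h2
    exact ⟨le_antisymm (hm1 r hp2) (hm2 q hp1), rfl⟩
  · exfalso
    obtain ⟨hp1, hm1⟩ := arc_eq_min H hj h1
    obtain ⟨hp2, hm2⟩ := arc_eq_min H hs h2
    have hpend : Pend H.hk c o j r := by
      refine ⟨lt_of_le_of_lt hrq h1.1, fun r' hr1 hr2 => hp2.2.1 r' hr1 (lt_trans hr2 hlt), ?_⟩
      exact lt_of_le_of_lt (cnt_mono H.hk c o (lab H.hk c o r) hjs) hp2.2.2
    have hqr : q = r := le_antisymm (hm1 r hpend) hrq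
    have : lab H.hk c o j = lab H.hk c o r := by rw [← h1.2.1, hqr]
    exact hp2.2.1 j hpend.1 hlt this

section FinLevel

/-- the canonical labeling as a function on `Fin n` -/
noncomputable def flab (H : Hyp n k c o) (x : Fin n) : Fin k := lab H.hk c o x.val

/-- the kernel setoid of `flab` -/
def kerS {n : ℕ} (f : Fin n → Fin k) : Setoid (Fin n) :=
  ⟨fun a b => f a = f b, ⟨fun _ => rfl, Eq.symm, Eq.trans⟩⟩

instance {n : ℕ} (f : Fin n → Fin k) : DecidableRel (kerS f).r :=
  fun a b => inferInstanceAs (Decidable (f a = f b))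

/-- the canonical nonnesting partition -/
noncomputable def part0 (H : Hyp n k c o) : Finpartition (Finset.univ : Finset (Fin n)) :=
  Finpartition.ofSetoid (kerS (flab H))

lemma sameBlock_part0_iff (H : Hyp n k c o) {x y : Fin n} :
    SameBlock (part0 H) x y ↔ flab H x = flab H y := by
  constructor
  · rintro ⟨B, hB, hx, hy⟩
    have hBx : (part0 H).part x = B := Finpartition.part_eq_of_mem _ hB hx
    have : y ∈ (part0 H).part x := hBx ▸ hy
    exact Finpartition.mem_part_ofSetoid_iff_rel.mp this
  · intro h
    exact ⟨(part0 H).part x, (part0 H).part_mem.mpr (Finset.mem_univ x),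
      (part0 H).mem_part (Finset.mem_univ x),
      Finpartition.mem_part_ofSetoid_iff_rel.mpr h⟩

/-- fibers of the canonical labeling -/
noncomputable def fib (H : Hyp n k c o) (i : Fin k) : Finset (Fin n) :=
  Finset.univ.filter fun x => flab H x = i

lemma mem_fib_iff (H : Hyp n k c o) {i : Fin k} {x : Fin n} :
    x ∈ fib H i ↔ flab H x = i := by simp [fib]

lemma card_fib (H : Hyp n k c o) (i : Fin k) : #(fib H i) = o i := by
  rw [← cnt_n H i]
  unfold cnt
  apply Finset.card_bij (fun (a : Fin n) _ => a.val)
  · intro a ha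
    rw [Finset.mem_filter, Finset.mem_range]
    exact ⟨a.isLt, (mem_fib_iff H).mp ha⟩
  · intro a _ b _ hab
    exact Fin.ext hab
  · intro b hb
    rw [Finset.mem_filter, Finset.mem_range] at hb
    exact ⟨⟨b, hb.1⟩, (mem_fib_iff H).mpr hb.2, rfl⟩

lemma fib_nonempty (H : Hyp n k c o) (i : Fin k) : (fib H i).Nonempty := by
  rw [← Finset.card_pos, card_fib H]
  exact H.ho i

lemma fib_inj (H : Hyp n k c o) : Function.Injective (fib H) := by
  intro i j hij
  obtain ⟨x, hx⟩ := fib_nonempty H i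
  have hx' : x ∈ fib H j := hij ▸ hx
  rw [mem_fib_iff] at hx hx'
  rw [← hx, hx']

lemma part0_part (H : Hyp n k c o) (x : Fin n) :
    (part0 H).part x = fib H (flab H x) := by
  ext y
  rw [mem_fib_iff]
  rw [show ((part0 H).part x) = ((Finpartition.ofSetoid (kerS (flab H))).part x) from rfl]
  rw [Finpartition.mem_part_ofSetoid_iff_rel]
  exact ⟨Eq.symm, Eq.symm⟩

lemma part0_parts (H : Hyp n k c o) :
    (part0 H).parts = Finset.univ.image (fib H) := by
  ext B
  constructor
  · intro hB
    obtain ⟨x, hx⟩ := (part0 H).nonempty_of_mem_parts hB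
    have := Finpartition.part_eq_of_mem _ hB hx
    rw [part0_part H x] at this
    exact Finset.mem_image.mpr ⟨flab H x, Finset.mem_univ _, this⟩
  · intro hB
    obtain ⟨i, -, rfl⟩ := Finset.mem_image.mp hB
    obtain ⟨x, hx⟩ := fib_nonempty H i
    rw [← (mem_fib_iff H).mp hx, ← part0_part H x]
    exact (part0 H).part_mem.mpr (Finset.mem_univ x)

lemma part0_card (H : Hyp n k c o) : #(part0 H).parts = k := by
  rw [part0_parts H, Finset.card_image_of_injective _ (fib_inj H), Finset.card_univ,
    Fintype.card_fin]

lemma fib_min (H : Hyp n k c o) (i : Fin k) :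
    ∃ hB : (fib H i).Nonempty, ((fib H i).min' hB).val + 1 = c i := by
  refine ⟨fib_nonempty H i, ?_⟩
  have hci : 1 ≤ c i := H.c_pos i
  have hlt : c i - 1 < n := by have := H.hcn i; omega
  have hmem : (⟨c i - 1, hlt⟩ : Fin n) ∈ fib H i :=
    (mem_fib_iff H).mpr (lab_of_c H i)
  have hle : ∀ y ∈ fib H i, (⟨c i - 1, hlt⟩ : Fin n) ≤ y := by
    intro y hy
    have h1 := lab_c_le H y.isLt
    have h2 : lab H.hk c o y.val = i := (mem_fib_iff H).mp hy
    rw [h2] at h1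
    rw [Fin.le_def]
    show c i - 1 ≤ y.val
    omega
  have : (fib H i).min' (fib_nonempty H i) = ⟨c i - 1, hlt⟩ :=
    le_antisymm (Finset.min'_le _ _ hmem) (Finset.le_min' _ _ _ hle)
  rw [this]
  show c i - 1 + 1 = c i
  omega

lemma isArc_part0_iff (H : Hyp n k c o) {x y : Fin n} :
    IsArc (part0 H) x y ↔ Arc H.hk c o x.val y.val := by
  unfold IsArc Arc
  constructor
  · rintro ⟨hxy, hsb, hz⟩
    refine ⟨hxy, (sameBlock_part0_iff H).mp hsb, ?_⟩
    · intro z hzl ⟨hz1, hz2⟩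
      have hzn : z < n := lt_trans hz2 y.isLt
      have : SameBlock (part0 H) x ⟨z, hzn⟩ :=
        (sameBlock_part0_iff H).mpr hzl.symm
      exact hz ⟨z, hzn⟩ this ⟨hz1, hz2⟩
  · rintro ⟨hxy, hlab, hz⟩
    refine ⟨hxy, (sameBlock_part0_iff H).mpr hlab, ?_⟩
    intro z hsb ⟨hz1, hz2⟩
    exact hz z.val ((sameBlock_part0_iff H).mp hsb).symm ⟨hz1, hz2⟩

lemma nonnesting_part0 (H : Hyp n k c o) : IsNonnesting (part0 H) := by
  intro x y r s h1 h2 hrx hys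
  have := nonnesting_N H y.isLt s.isLt ((isArc_part0_iff H).mp h1)
    ((isArc_part0_iff H).mp h2) hrx hys
  exact ⟨Fin.ext this.1, Fin.ext this.2⟩

theorem eq_part0 (H : Hyp n k c o) (π : Finpartition (Finset.univ : Finset (Fin n)))
    (hnn : IsNonnesting π) (hcard : #π.parts = k)
    (hdata : ∀ i : Fin k, ∃ B ∈ π.parts, #B = o i ∧
      ∃ hB : B.Nonempty, (B.min' hB).val + 1 = c i) :
    π = part0 H := by
  choose B hBmem hBcard hBne hBmin using hdata
  have hBinj : Function.Injective B := by
    intro i j hij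
    apply H.cinj
    rw [← hBmin i, ← hBmin j]
    have : (B i).min' (hBne i) = (B j).min' (hBne j) := by
      apply le_antisymm
      · exact Finset.min'_le _ _ (by rw [hij]; exact Finset.min'_mem _ _)
      · exact Finset.min'_le _ _ (by rw [← hij]; exact Finset.min'_mem _ _)
    rw [this]
  have hparts : π.parts = Finset.univ.image B := by
    symm
    apply Finset.eq_of_subset_of_card_le
    · intro t ht
      obtain ⟨i, -, rfl⟩ := Finset.mem_image.mp ht
      exact hBmem i
    · rw [hcard, Finset.card_image_of_injective _ hBinj, Finset.card_univ, Fintype.card_fin]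
  have hcover : ∀ x : Fin n, ∃ i, x ∈ B i := by
    intro x
    obtain ⟨t, ht, hxt⟩ := π.exists_mem (Finset.mem_univ x)
    rw [hparts] at ht
    obtain ⟨i, -, rfl⟩ := Finset.mem_image.mp ht
    exact ⟨i, hxt⟩
  have huniq : ∀ (x : Fin n) (i j : Fin k), x ∈ B i → x ∈ B j → i = j := by
    intro x i j hi hj
    exact hBinj (π.eq_of_mem_parts (hBmem i) (hBmem j) hi hj)
  have key : ∀ p : ℕ, ∀ hp : p < n, (⟨p, hp⟩ : Fin n) ∈ B (lab H.hk c o p) := by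
    intro p
    induction p using Nat.strong_induction_on with
    | _ p IH =>
    intro hp
    have hIH : ∀ r : ℕ, r < p → ∀ (hr : r < n) (i : Fin k),
        (⟨r, hr⟩ : Fin n) ∈ B i ↔ lab H.hk c o r = i := by
      intro r hrp hr i
      constructor
      · intro hmem
        exact huniq ⟨r, hr⟩ _ _ (IH r hrp hr) hmem
      · rintro rfl
        exact IH r hrp hr
    by_cases hmin : ∃ i, c i = p + 1
    · obtain ⟨i, hi⟩ := hmin
      rw [lab_min H.hk c o H.cinj hi]
      have : ((B i).min' (hBne i)) = ⟨p, hp⟩ := Fin.ext (by have := hBmin i; simp; omega)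
      rw [← this]
      exact Finset.min'_mem _ _
    · set x : Fin n := ⟨p, hp⟩ with hxdef
      obtain ⟨ix, hmemx⟩ := hcover x
      have hminx : (B ix).min' (hBne ix) < x := by
        rcases lt_or_eq_of_le (Finset.min'_le _ _ hmemx) with h | h
        · exact h
        · exact absurd ⟨ix, by rw [← hBmin ix, h]⟩ hmin
      have hfne : ((B ix).filter fun z => z < x).Nonempty :=
        ⟨_, Finset.mem_filter.mpr ⟨Finset.min'_mem _ _, hminx⟩⟩
      set q : Fin n := ((B ix).filter fun z => z < x).max' hfne with hqdef
      have hqm := Finset.mem_filter.mp (((B ix).filter fun z => z < x).max'_mem hfne)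
      have hqmax : ∀ z ∈ B ix, z < x → z ≤ q := fun z hz hzx =>
        Finset.le_max' ((B ix).filter fun z => z < x) z (Finset.mem_filter.mpr ⟨hz, hzx⟩)
      have hqvp : q.val < p := hqm.2
      have hlabq : lab H.hk c o q.val = ix := by
        have hq' := IH q.val hqvp q.isLt
        rw [Fin.eta] at hq'
        exact huniq q _ _ hq' hqm.1
      have hcnteq : ∀ i : Fin k, cnt H.hk c o p i = #((B i).filter fun z => z < x) := by
        intro i
        unfold cnt
        apply Finset.card_bij
          (fun r hr => (⟨r, lt_trans (Finset.mem_range.mp (Finset.mem_filter.mp hr).1) hp⟩ : Fin n))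
        · intro r hr
          obtain ⟨h1, h2⟩ := Finset.mem_filter.mp hr
          rw [Finset.mem_range] at h1
          exact Finset.mem_filter.mpr ⟨(hIH r h1 _ i).mpr h2, by exact h1⟩
        · intro r hr r' hr' hrr
          exact congrArg Fin.val hrr
        · intro z hz
          obtain ⟨hz1, hz2⟩ := Finset.mem_filter.mp hz
          have hzp : z.val < p := hz2
          refine ⟨z.val, Finset.mem_filter.mpr ⟨Finset.mem_range.mpr hzp, ?_⟩, Fin.eta z _⟩
          exact (hIH z.val hzp z.isLt i).mp (by rw [Fin.eta]; exact hz1)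
      have hcnt : ∀ i : Fin k, x ∈ B i → cnt H.hk c o p i < o i := by
        intro i hxBi
        rw [hcnteq i, ← hBcard i]
        apply Finset.card_lt_card
        constructor
        · exact Finset.filter_subset _ _
        · intro hsub
          have := Finset.mem_filter.mp (hsub hxBi)
          exact absurd this.2 (lt_irrefl x)
      obtain ⟨q0, hq0pend, hlab0, hq0min⟩ := step H hp hmin
      have hPendq : Pend H.hk c o p q.val := by
        refine ⟨hqvp, ?_, ?_⟩
        · intro r hqr hrp hlabr
          have hrn : r < n := lt_trans hrp hp
          have hmem : (⟨r, hrn⟩ : Fin n) ∈ B ix :=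
            (hIH r hrp hrn ix).mpr (by rw [hlabr, hlabq])
          have := hqmax ⟨r, hrn⟩ hmem (by exact hrp)
          rw [Fin.le_def] at this
          simp only [Fin.val_mk] at this
          omega
        · rw [hlabq]; exact hcnt ix hmemx
      have hq0q : q0 ≤ q.val := hq0min q.val hPendq
      have hqq0 : q.val ≤ q0 := by
        by_contra hgt
        push_neg at hgt
        obtain ⟨hq0p, hq0last, hq0cnt⟩ := hq0pend
        have hq0n : q0 < n := lt_trans hq0p hp
        have hq0mem : (⟨q0, hq0n⟩ : Fin n) ∈ B (lab H.hk c o q0) :=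
          (hIH q0 hq0p hq0n _).mpr rfl
        set i' := lab H.hk c o q0 with hi'
        have hfilt : #((B i').filter fun z => z < x) < #(B i') := by
          rw [← hcnteq i', hBcard i']
          exact hq0cnt
        have hsne : ((B i').filter fun z => ¬ z < x).Nonempty := by
          rw [← Finset.card_pos]
          have := Finset.card_filter_add_card_filter_not
            (s := B i') (p := fun z => z < x)
          omega
        set s : Fin n := ((B i').filter fun z => ¬ z < x).min' hsne with hsdef
        have hsm := Finset.mem_filter.mp (((B i').filter fun z => ¬ z < x).min'_mem hsne)
        have hsmin : ∀ z ∈ B i', ¬ z < x → s ≤ z := fun z h1 h2 =>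
          Finset.min'_le _ _ (Finset.mem_filter.mpr ⟨h1, h2⟩)
        have harc1 : IsArc π q x := by
          refine ⟨hqm.2, ⟨B ix, hBmem ix, hqm.1, hmemx⟩, ?_⟩
          rintro z hsb ⟨h1, h2⟩
          obtain ⟨t, ht, hqt, hzt⟩ := hsb
          have hteq : t = B ix := π.eq_of_mem_parts ht (hBmem ix) hqt hqm.1
          rw [hteq] at hzt
          exact absurd h1 (not_lt.mpr (hqmax z hzt h2))
        have harc2 : IsArc π ⟨q0, hq0n⟩ s := by
          have hxls : x ≤ s := not_lt.mp hsm.2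
          refine ⟨?_, ⟨B i', hBmem i', hq0mem, hsm.1⟩, ?_⟩
          · rw [Fin.lt_def]
            have : (p : ℕ) ≤ s.val := hxls
            simp only [Fin.val_mk]
            omega
          · rintro z hsb ⟨h1, h2⟩
            obtain ⟨t, ht, hq0t, hzt⟩ := hsb
            have hteq : t = B i' := π.eq_of_mem_parts ht (hBmem i') hq0t hq0mem
            rw [hteq] at hzt
            by_cases hzx : z < x
            · have hzp : z.val < p := hzx
              have hlz : lab H.hk c o z.val = i' :=
                (hIH z.val hzp z.isLt i').mp (by rw [Fin.eta]; exact hzt)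
              exact hq0last z.val h1 hzp hlz
            · exact absurd h2 (not_lt.mpr (hsmin z hzt hzx))
        have hns := hnn q x ⟨q0, hq0n⟩ s harc1 harc2
          (by rw [Fin.le_def]; simp only [Fin.val_mk]; omega)
          (not_lt.mp hsm.2)
        have : q.val = q0 := congrArg Fin.val hns.1
        omega
      have hqeq : q0 = q.val := le_antisymm hq0q hqq0
      rw [hlab0, hqeq, hlabq]
      exact hmemx
  have hBfib : ∀ i, B i = fib H i := by
    intro i
    symm
    apply Finset.eq_of_subset_of_card_le
    · intro x hx
      have h1 : lab H.hk c o x.val = i := (mem_fib_iff H).mp hx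
      have h2 := key x.val x.isLt
      rw [Fin.eta, h1] at h2
      exact h2
    · rw [hBcard i, card_fib H i]
  apply Finpartition.ext
  rw [hparts, part0_parts H]
  exact Finset.image_congr fun i _ => hBfib i

end FinLevel

section Counting

lemma multinomial_succ (k : ℕ) (o : Fin (k + 1) → ℕ) :
    Nat.multinomial Finset.univ o
      = (∑ i, o i).choose (o (Fin.last k))
        * Nat.multinomial Finset.univ (o ∘ Fin.castSucc) := by
  have hU : (Finset.univ : Finset (Fin (k + 1)))
      = insert (Fin.last k) (Finset.univ.map Fin.castSuccEmb) := by
    ext i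
    simp only [Finset.mem_univ, true_iff, Finset.mem_insert, Finset.mem_map]
    rcases Fin.eq_castSucc_or_eq_last i with ⟨j, rfl⟩ | h
    · exact Or.inr ⟨j, trivial, rfl⟩
    · exact Or.inl h
  have hnm : Fin.last k ∉ Finset.univ.map Fin.castSuccEmb := by
    rw [Finset.mem_map]
    rintro ⟨j, -, hj⟩
    exact absurd (show Fin.castSucc j = Fin.last k from hj)
      (ne_of_lt (Fin.castSucc_lt_last j))
  have h1 : ∑ i ∈ Finset.univ.map Fin.castSuccEmb, o i = ∑ i : Fin k, o (Fin.castSucc i) := by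
    rw [Finset.sum_map]; rfl
  have h2 : o (Fin.last k) + ∑ i : Fin k, o (Fin.castSucc i) = ∑ i, o i := by
    rw [Fin.sum_univ_castSucc o]; omega
  have h3 : Nat.multinomial (Finset.univ.map Fin.castSuccEmb) o
      = Nat.multinomial Finset.univ (o ∘ Fin.castSucc) := by
    unfold Nat.multinomial
    rw [Finset.sum_map, Finset.prod_map]
    rfl
  conv_lhs => rw [hU]
  rw [Nat.multinomial_insert hnm, h1, h2, h3]

/-- fiber-size condition -/
def FibCond {α : Type} [Fintype α] {k : ℕ} (o : Fin k → ℕ) (f : α → Fin k) : Prop :=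
  ∀ i, #(Finset.univ.filter fun q => f q = i) = o i

theorem card_fibCond (k : ℕ) :
    ∀ (α : Type) [Fintype α] [DecidableEq α] (o : Fin k → ℕ),
      (∑ i, o i = Fintype.card α) →
      Nat.card {f : α → Fin k // FibCond o f} = Nat.multinomial Finset.univ o := by
  induction k with
  | zero =>
      intro α _ _ o hsum
      haveI : IsEmpty α := by
        rw [← Fintype.card_eq_zero_iff]
        have h0 : ∑ i : Fin 0, o i = 0 := by simp
        omega
      have h1 : Nat.card {f : α → Fin 0 // FibCond o f} = 1 := by
        rw [Nat.card_eq_one_iff_unique]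
        constructor
        · exact ⟨fun f g => Subtype.ext (funext fun a => isEmptyElim a)⟩
        · exact ⟨⟨fun a => isEmptyElim a, fun i => isEmptyElim i⟩⟩
      rw [h1, show (Finset.univ : Finset (Fin 0)) = ∅ from rfl, Nat.multinomial_empty]
  | succ k ih =>
      intro α _ _ o hsum
      classical
      set m := o (Fin.last k) with hm
      set Φ : {f : α → Fin (k + 1) // FibCond o f} → {s : Finset α // #s = m} :=
        fun F => ⟨Finset.univ.filter fun a => F.1 a = Fin.last k, F.2 (Fin.last k)⟩ with hΦ
      have e1 : {f : α → Fin (k + 1) // FibCond o f} ≃ Σ s₀, {F // Φ F = s₀} :=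
        (Equiv.sigmaFiberEquiv Φ).symm
      have e2 : ∀ s₀ : {s : Finset α // #s = m},
          {F // Φ F = s₀} ≃
            {g : {a : α // a ∈ (s₀.1)ᶜ} → Fin k // FibCond (o ∘ Fin.castSucc) g} := by
        intro s₀
        have hmem : ∀ (F : {f : α → Fin (k + 1) // FibCond o f}), Φ F = s₀ →
            ∀ a : {a : α // a ∈ (s₀.1)ᶜ}, F.1 a.1 ≠ Fin.last k := by
          intro F hF a hlast
          have hFv : (Finset.univ.filter fun a => F.1 a = Fin.last k) = s₀.1 :=
            congrArg Subtype.val hF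
          exact Finset.mem_compl.mp a.2 ((Finset.ext_iff.mp hFv a.1).mp
            (Finset.mem_filter.mpr ⟨Finset.mem_univ _, hlast⟩))
        refine ⟨fun F => ⟨fun a => (F.1.1 a.1).castPred (hmem F.1 F.2 a), ?_⟩,
          fun g => ⟨⟨fun a => if h : a ∈ s₀.1 then Fin.last k
            else Fin.castSucc (g.1 ⟨a, Finset.mem_compl.mpr h⟩), ?_⟩, ?_⟩, ?_, ?_⟩
        case refine_1 =>
          intro i
          simp only [Function.comp_apply]
          rw [← F.1.2 (Fin.castSucc i)]
          apply Finset.card_bij (fun a _ => a.1)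
          · intro a ha
            have h2 := (Finset.mem_filter.mp ha).2
            refine Finset.mem_filter.mpr ⟨Finset.mem_univ _, ?_⟩
            rw [← h2]
            exact (Fin.castSucc_castPred _ _).symm
          · intro a _ b _ hab
            exact Subtype.ext hab
          · intro b hb
            have hb2 := (Finset.mem_filter.mp hb).2
            have hFv : (Finset.univ.filter fun a => F.1.1 a = Fin.last k) = s₀.1 :=
              congrArg Subtype.val F.2
            have hbc : b ∈ (s₀.1)ᶜ := by
              rw [Finset.mem_compl]
              intro hmem2
              have := (Finset.mem_filter.mp ((Finset.ext_iff.mp hFv b).mpr hmem2)).2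
              rw [hb2] at this
              exact absurd this (ne_of_lt (Fin.castSucc_lt_last i))
            refine ⟨⟨b, hbc⟩, Finset.mem_filter.mpr ⟨Finset.mem_univ _, ?_⟩, rfl⟩
            simp only [hb2, Fin.castPred_castSucc]
        case refine_2 =>
          -- FibCond for the glued function
          intro i
          rcases Fin.eq_castSucc_or_eq_last i with ⟨j, rfl⟩ | hlast
          · have hg2 := g.2 j
            simp only [Function.comp_apply] at hg2
            rw [← hg2]
            apply Finset.card_bij (fun (a : α) ha =>
              (⟨a, Finset.mem_compl.mpr (by
                intro hmem2
                have h9 := (Finset.mem_filter.mp ha).2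
                beta_reduce at h9
                rw [dif_pos hmem2] at h9
                exact absurd h9.symm (ne_of_lt (Fin.castSucc_lt_last j)))⟩ :
                  {a : α // a ∈ (s₀.1)ᶜ}))
            · intro a ha
              have h2 := (Finset.mem_filter.mp ha).2
              beta_reduce at h2
              refine Finset.mem_filter.mpr ⟨Finset.mem_univ _, ?_⟩
              have hnm : a ∉ s₀.1 := by
                intro hmem2
                rw [dif_pos hmem2] at h2
                exact absurd h2.symm (ne_of_lt (Fin.castSucc_lt_last j))
              rw [dif_neg hnm] at h2
              exact Fin.castSucc_injective k h2
            · intro a _ b _ hab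
              exact congrArg Subtype.val hab
            · intro b hb
              have hb2 := (Finset.mem_filter.mp hb).2
              refine ⟨b.1, Finset.mem_filter.mpr ⟨Finset.mem_univ _, ?_⟩, by simp⟩
              beta_reduce
              rw [dif_neg (Finset.mem_compl.mp b.2), hb2]
          · subst hlast
            rw [← hm]
            rw [show (Finset.univ.filter fun a =>
                (if h : a ∈ s₀.1 then Fin.last k
                  else Fin.castSucc (g.1 ⟨a, Finset.mem_compl.mpr h⟩)) = Fin.last k) = s₀.1
              from ?_]
            · exact s₀.2
            · ext a
              simp only [Finset.mem_filter, Finset.mem_univ, true_and]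
              constructor
              · intro ha
                by_contra hno
                rw [dif_neg hno] at ha
                exact absurd ha (ne_of_lt (Fin.castSucc_lt_last _))
              · intro ha
                rw [dif_pos ha]
        case refine_3 =>
          apply Subtype.ext
          show (Finset.univ.filter _) = s₀.1
          ext a
          simp only [Finset.mem_filter, Finset.mem_univ, true_and]
          constructor
          · intro ha
            by_contra hno
            rw [dif_neg hno] at ha
            exact absurd ha (ne_of_lt (Fin.castSucc_lt_last _))
          · intro ha
            rw [dif_pos ha]
        case refine_4 =>
          intro F
          apply Subtype.ext
          apply Subtype.ext
          funext a
          show (if h : a ∈ s₀.1 then Fin.last k else _) = F.1.1 a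
          by_cases ha : a ∈ s₀.1
          · rw [dif_pos ha]
            have hFv : (Finset.univ.filter fun a => F.1.1 a = Fin.last k) = s₀.1 :=
              congrArg Subtype.val F.2
            exact ((Finset.mem_filter.mp ((Finset.ext_iff.mp hFv a).mpr ha)).2).symm
          · rw [dif_neg ha]
            exact Fin.castSucc_castPred _ (hmem F.1 F.2 ⟨a, Finset.mem_compl.mpr ha⟩)
        case refine_5 =>
          intro g
          apply Subtype.ext
          funext a
          apply Fin.castSucc_injective
          rw [Fin.castSucc_castPred]
          show (if h : a.1 ∈ s₀.1 then Fin.last k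
            else Fin.castSucc (g.1 ⟨a.1, Finset.mem_compl.mpr h⟩)) = Fin.castSucc (g.1 a)
          rw [dif_neg (Finset.mem_compl.mp a.2)]
      -- count
      haveI : ∀ s₀ : {s : Finset α // #s = m},
          Fintype {F // Φ F = s₀} := fun s₀ => Fintype.ofFinite _
      have hcard1 : Nat.card {f : α → Fin (k + 1) // FibCond o f}
          = ∑ s₀ : {s : Finset α // #s = m}, Nat.card {F // Φ F = s₀} := by
        rw [Nat.card_congr e1, Nat.card_eq_fintype_card, Fintype.card_sigma]
        exact Finset.sum_congr rfl fun s₀ _ => (Nat.card_eq_fintype_card).symm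
      have hcard2 : ∀ s₀ : {s : Finset α // #s = m},
          Nat.card {F // Φ F = s₀} = Nat.multinomial Finset.univ (o ∘ Fin.castSucc) := by
        intro s₀
        rw [Nat.card_congr (e2 s₀)]
        apply ih
        have h1 : Fintype.card {a : α // a ∈ (s₀.1)ᶜ} = Fintype.card α - m := by
          rw [Fintype.card_coe, Finset.card_compl, s₀.2]
        rw [h1]
        have h2 : ∑ i, (o ∘ Fin.castSucc) i + m = Fintype.card α := by
          rw [← hsum, Fin.sum_univ_castSucc o]
          rfl
        have h3 : m ≤ Fintype.card α := by omega
        omega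
      rw [hcard1]
      rw [Finset.sum_congr rfl fun s₀ _ => hcard2 s₀]
      rw [Finset.sum_const, Finset.card_univ, Fintype.card_finset_len, smul_eq_mul]
      rw [multinomial_succ, hsum, hm]

end Counting

section Equivs

variable {n : ℕ} {c o : Fin k → ℕ}

/-- the prescribed multiset of values -/
def MM (c o : Fin k → ℕ) : Multiset ℕ := ∑ i : Fin k, Multiset.replicate (o i) (c i)

lemma countP_sum (p : ℕ → Prop) [DecidablePred p] {β : Type*} (s : Finset β)
    (g : β → Multiset ℕ) :
    Multiset.countP p (∑ x ∈ s, g x) = ∑ x ∈ s, Multiset.countP p (g x) := by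
  induction s using Finset.cons_induction with
  | empty => simp
  | cons a s ha ih => rw [Finset.sum_cons, Finset.sum_cons, Multiset.countP_add, ih]

lemma countP_replicate (p : ℕ → Prop) [DecidablePred p] (m v : ℕ) :
    Multiset.countP p (Multiset.replicate m v) = if p v then m else 0 := by
  induction m with
  | zero => simp
  | succ m ih =>
      rw [Multiset.replicate_succ, Multiset.countP_cons, ih]
      split <;> omega

lemma count_MM (H : Hyp n k c o) (i : Fin k) : Multiset.count (c i) (MM c o) = o i := by
  unfold MM
  rw [Multiset.count_sum']
  rw [Finset.sum_eq_single i]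
  · rw [Multiset.count_replicate, if_pos rfl]
  · intro j _ hji
    rw [Multiset.count_replicate, if_neg (fun h => hji (H.cinj h))]
  · intro h
    exact absurd (Finset.mem_univ i) h

lemma mem_MM (H : Hyp n k c o) {v : ℕ} : v ∈ MM c o ↔ ∃ i, v = c i := by
  unfold MM
  rw [Multiset.mem_sum]
  constructor
  · rintro ⟨i, -, hv⟩
    exact ⟨i, Multiset.eq_of_mem_replicate hv⟩
  · rintro ⟨i, rfl⟩
    refine ⟨i, Finset.mem_univ i, Multiset.mem_replicate.mpr ⟨?_, rfl⟩⟩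
    have := H.ho i
    omega

lemma countP_MM_lt (H : Hyp n k c o) (i : Fin k) :
    Multiset.countP (fun v => v < c i) (MM c o)
      = ∑ j ∈ Finset.univ.filter fun j => j < i, o j := by
  unfold MM
  rw [countP_sum]
  rw [Finset.sum_filter]
  apply Finset.sum_congr rfl
  intro j _
  rw [countP_replicate]
  by_cases h : j < i
  · rw [if_pos (H.hc h), if_pos h]
  · rw [if_neg h, if_neg (fun hlt => h (H.hc.lt_iff_lt.mp hlt))]

lemma card_filter_eq_count (a : Fin n → ℕ) (v : ℕ) :
    #(Finset.univ.filter fun q => a q = v) = Multiset.count v (Finset.univ.val.map a) := by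
  rw [Multiset.count_map, Finset.card_def, Finset.filter_val]
  exact congrArg Multiset.card (Multiset.filter_congr fun q _ => ⟨Eq.symm, Eq.symm⟩)

lemma sorted_le (H : Hyp n k c o) (u : Fin n → ℕ) (hmono : Monotone u)
    (hu : Finset.univ.val.map u = MM c o) : ∀ j : Fin n, u j ≤ j.val + 1 := by
  intro j
  have hmem : u j ∈ MM c o := by
    rw [← hu]
    exact Multiset.mem_map.mpr ⟨j, by rw [Finset.mem_val]; exact Finset.mem_univ j, rfl⟩
  obtain ⟨i, hi⟩ := (mem_MM H).mp hmem
  have h1 : c i ≤ (∑ j' ∈ Finset.univ.filter fun j' => j' < i, o j') + 1 := by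
    rcases Nat.eq_zero_or_pos i.val with h0 | h0
    · have : i = ⟨0, H.hk⟩ := Fin.ext h0
      rw [this, H.hc1]
      omega
    · exact H.hco i h0
  have h3 : Multiset.countP (fun v => v < c i) (MM c o)
      = #(Finset.univ.filter fun q => u q < c i) := by
    rw [← hu, Multiset.countP_map, Finset.card_def, Finset.filter_val]
  have h4 : (Finset.univ.filter fun q => u q < c i) ⊆ Finset.Iio j := by
    intro q hq
    rw [Finset.mem_filter] at hq
    rw [Finset.mem_Iio]
    by_contra hle
    push_neg at hle
    have := hmono hle
    omega
  have h5 := Finset.card_le_card h4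
  rw [Fin.card_Iio] at h5
  have h6 := countP_MM_lt H i
  omega

lemma parking_of_multiset (H : Hyp n k c o) (a : Fin n → ℕ)
    (ha : Finset.univ.val.map a = MM c o) : IsParkingFunction n a := by
  constructor
  · intro q
    have hmem : a q ∈ MM c o := by
      rw [← ha]
      exact Multiset.mem_map.mpr ⟨q, by rw [Finset.mem_val]; exact Finset.mem_univ q, rfl⟩
    obtain ⟨i, hi⟩ := (mem_MM H).mp hmem
    rw [Finset.mem_Icc, hi]
    exact ⟨H.c_pos i, H.hcn i⟩
  · refine ⟨Tuple.sort a, Tuple.monotone_sort a, ?_⟩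
    have hu : Finset.univ.val.map (a ∘ Tuple.sort a) = MM c o := by
      have hg : Finset.univ.val.map (⇑(Tuple.sort a)) = Finset.univ.val := by
        have h9 := congrArg Finset.val (Finset.map_univ_equiv (Tuple.sort a))
        rwa [Finset.map_val, Equiv.coe_toEmbedding] at h9
      rw [← Multiset.map_map, hg, ha]
    exact fun j => sorted_le H _ (Tuple.monotone_sort a) hu j

lemma exists_idx (H : Hyp n k c o) {a : Fin n → ℕ}
    (ha : Finset.univ.val.map a = MM c o) (q : Fin n) : ∃ i, a q = c i :=
  (mem_MM H).mp (by
    rw [← ha]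
    exact Multiset.mem_map.mpr ⟨q, by rw [Finset.mem_val]; exact Finset.mem_univ q, rfl⟩)

lemma map_cf (H : Hyp n k c o) (F : {f : Fin n → Fin k // FibCond o f}) :
    Finset.univ.val.map (fun q => c (F.1 q)) = MM c o := by
  apply Multiset.ext.mpr
  intro v
  rw [← card_filter_eq_count]
  by_cases hv : ∃ i, v = c i
  · obtain ⟨i, rfl⟩ := hv
    have hfe : (Finset.univ.filter fun q => c (F.1 q) = c i)
        = Finset.univ.filter fun q => F.1 q = i :=
      Finset.filter_congr fun q _ => ⟨fun h => H.cinj h, fun h => by rw [h]⟩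
    rw [hfe, F.2 i, count_MM H i]
  · have h0 : Multiset.count v (MM c o) = 0 :=
      Multiset.count_eq_zero.mpr (fun hmem => hv ((mem_MM H).mp hmem))
    rw [h0, Finset.card_eq_zero, Finset.filter_eq_empty_iff]
    exact fun q _ h => hv ⟨F.1 q, h.symm⟩

lemma choose_eq (H : Hyp n k c o) {a : Fin n → ℕ}
    (ha : Finset.univ.val.map a = MM c o) (q : Fin n) {i : Fin k} (h : a q = c i) :
    (exists_idx H ha q).choose = i :=
  H.cinj (((exists_idx H ha q).choose_spec).symm.trans h)

noncomputable def eqv1 (H : Hyp n k c o) :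
    {a : Fin n → ℕ // IsParkingFunction n a ∧ Finset.univ.val.map a = MM c o}
      ≃ {f : Fin n → Fin k // FibCond o f} where
  toFun A := ⟨fun q => (exists_idx H A.2.2 q).choose, by
    intro i
    have hfe : (Finset.univ.filter fun q => (exists_idx H A.2.2 q).choose = i)
        = Finset.univ.filter fun q => A.1 q = c i := by
      apply Finset.filter_congr
      intro q _
      constructor
      · intro h
        rw [(exists_idx H A.2.2 q).choose_spec, h]
      · intro h
        exact choose_eq H A.2.2 q h
    rw [hfe, card_filter_eq_count, A.2.2, count_MM H i]⟩
  invFun F := ⟨fun q => c (F.1 q), parking_of_multiset H _ (map_cf H F), map_cf H F⟩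
  left_inv A := Subtype.ext (funext fun q => ((exists_idx H A.2.2 q).choose_spec).symm)
  right_inv F := Subtype.ext (funext fun q => choose_eq H (map_cf H F) q rfl)

/-- `w` increases along all arcs of the canonical partition -/
def IncOnArcs (H : Hyp n k c o) (w : Equiv.Perm (Fin n)) : Prop :=
  ∀ x y : Fin n, IsArc (part0 H) x y → w x < w y

lemma part0_data (H : Hyp n k c o) :
    ∀ i : Fin k, ∃ B ∈ (part0 H).parts, #B = o i ∧
      ∃ hB : B.Nonempty, (B.min' hB).val + 1 = c i := by
  intro i
  refine ⟨fib H i, ?_, card_fib H i, fib_min H i⟩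
  rw [part0_parts H]
  exact Finset.mem_image_of_mem _ (Finset.mem_univ i)

/-- E2: pairs (w, A) correspond to arc-increasing permutations -/
noncomputable def eqv2 (H : Hyp n k c o) :
    {p : Equiv.Perm (Fin n) × Set (Fin n × Fin n) //
        IsAntichainQw n p.1 p.2 ∧
          ∃ π : Finpartition (Finset.univ : Finset (Fin n)), IsNonnesting π ∧
            p.2 = {q : Fin n × Fin n | IsArc π q.1 q.2} ∧
            π.parts.card = k ∧
            ∀ i : Fin k, ∃ B ∈ π.parts, B.card = o i ∧
              ∃ hB : B.Nonempty, (B.min' hB).val + 1 = c i}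
      ≃ {w : Equiv.Perm (Fin n) // IncOnArcs H w} where
  toFun P := ⟨P.1.1, by
    obtain ⟨hac, π, hnn, hAeq, hcard, hdata⟩ := P.2
    have hπ : π = part0 H := eq_part0 H π hnn hcard hdata
    intro x y harc
    have hxy : (x, y) ∈ P.1.2 := by
      rw [hAeq, hπ]
      exact harc
    exact (hac.1 (x, y) hxy).2⟩
  invFun w := ⟨(w.1, {q : Fin n × Fin n | IsArc (part0 H) q.1 q.2}), by
    constructor
    · constructor
      · intro p hp
        exact ⟨hp.1, w.2 p.1 p.2 hp⟩
      · intro p hp q hq hne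
        constructor
        · rintro ⟨h1, h2⟩
          apply hne
          have := nonnesting_part0 H p.1 p.2 q.1 q.2 hp hq h1 h2
          exact Prod.ext this.1 this.2
        · rintro ⟨h1, h2⟩
          apply hne
          have := nonnesting_part0 H q.1 q.2 p.1 p.2 hq hp h1 h2
          exact Prod.ext this.1.symm this.2.symm
    · exact ⟨part0 H, nonnesting_part0 H, rfl, part0_card H, part0_data H⟩⟩
  left_inv P := by
    obtain ⟨⟨w, A⟩, hac, π, hnn, hAeq, hcard, hdata⟩ := P
    apply Subtype.ext
    have hπ : π = part0 H := eq_part0 H π hnn hcard hdata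
    show (w, {q : Fin n × Fin n | IsArc (part0 H) q.1 q.2}) = (w, A)
    have hA : A = {q : Fin n × Fin n | IsArc π q.1 q.2} := hAeq
    rw [hA, hπ]
  right_inv w := rfl

lemma mono_on_fiber (H : Hyp n k c o) (w : Equiv.Perm (Fin n)) (hw : IncOnArcs H w) :
    ∀ d : ℕ, ∀ x y : Fin n, y.val - x.val ≤ d → flab H x = flab H y → x < y →
      w x < w y := by
  intro d
  induction d with
  | zero =>
      intro x y hd _ hxy
      rw [Fin.lt_def] at hxy
      omega
  | succ d ih =>
      intro x y hd hlab hxy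
      by_cases hz : ∃ z : Fin n, flab H z = flab H x ∧ x < z ∧ z < y
      · obtain ⟨z, hz1, hz2, hz3⟩ := hz
        have hv2 : x.val < z.val := hz2
        have hv3 : z.val < y.val := hz3
        have w1 : w x < w z := ih x z (by omega) hz1.symm hz2
        have w2 : w z < w y := ih z y (by omega) (by rw [hz1, hlab]) hz3
        exact lt_trans w1 w2
      · push_neg at hz
        apply hw x y
        rw [isArc_part0_iff H]
        refine ⟨hxy, hlab, ?_⟩
        rintro z hzl ⟨hb1, hb2⟩
        have hzn : z < n := lt_trans hb2 y.isLt
        have hle := hz ⟨z, hzn⟩ hzl (by exact hb1)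
        rw [Fin.le_def] at hle
        have : y.val ≤ z := hle
        omega

lemma wmono (H : Hyp n k c o) (w : Equiv.Perm (Fin n)) (hw : IncOnArcs H w)
    {x y : Fin n} (hlab : flab H x = flab H y) (hxy : x < y) : w x < w y :=
  mono_on_fiber H w hw n x y (by omega) hlab hxy

lemma fibcond_perm (H : Hyp n k c o) (w : Equiv.Perm (Fin n)) :
    FibCond o (fun q => flab H (w.symm q)) := by
  intro i
  rw [← card_fib H i]
  apply Finset.card_bij (fun q _ => w.symm q)
  · intro q hq
    exact (mem_fib_iff H).mpr (Finset.mem_filter.mp hq).2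
  · intro q _ q' _ h
    exact w.symm.injective h
  · intro x hx
    refine ⟨w x, Finset.mem_filter.mpr ⟨Finset.mem_univ _, ?_⟩, Equiv.symm_apply_apply w x⟩
    show flab H (w.symm (w x)) = i
    rw [Equiv.symm_apply_apply]
    exact (mem_fib_iff H).mp hx

/-- the map from arc-increasing permutations to fiber functions -/
noncomputable def psi (H : Hyp n k c o) (w : {w : Equiv.Perm (Fin n) // IncOnArcs H w}) :
    {f : Fin n → Fin k // FibCond o f} :=
  ⟨fun q => flab H (w.1.symm q), fibcond_perm H w.1⟩

lemma psi_injective (H : Hyp n k c o) : Function.Injective (psi H) := by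
  intro w w' h
  have hf : ∀ q, flab H (w.1.symm q) = flab H (w'.1.symm q) :=
    fun q => congrFun (congrArg Subtype.val h) q
  apply Subtype.ext
  apply Equiv.ext
  intro x
  set i := flab H x with hi
  set u := (fib H i).orderEmbOfFin (card_fib H i) with hu
  have humem : ∀ t, u t ∈ fib H i := fun t => Finset.orderEmbOfFin_mem _ _ t
  have hkey1 : (fun t => w.1 (u t))
      = ⇑((Finset.univ.filter fun q => flab H (w.1.symm q) = i).orderEmbOfFin
        (fibcond_perm H w.1 i)) := by
    apply Finset.orderEmbOfFin_unique
    · intro t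
      refine Finset.mem_filter.mpr ⟨Finset.mem_univ _, ?_⟩
      rw [Equiv.symm_apply_apply]
      exact (mem_fib_iff H).mp (humem t)
    · intro t t' htt
      exact wmono H w.1 w.2 (by
        rw [(mem_fib_iff H).mp (humem t), (mem_fib_iff H).mp (humem t')])
        (u.strictMono htt)
  have hkey2 : (fun t => w'.1 (u t))
      = ⇑((Finset.univ.filter fun q => flab H (w.1.symm q) = i).orderEmbOfFin
        (fibcond_perm H w.1 i)) := by
    apply Finset.orderEmbOfFin_unique
    · intro t
      refine Finset.mem_filter.mpr ⟨Finset.mem_univ _, ?_⟩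
      rw [hf, Equiv.symm_apply_apply]
      exact (mem_fib_iff H).mp (humem t)
    · intro t t' htt
      exact wmono H w'.1 w'.2 (by
        rw [(mem_fib_iff H).mp (humem t), (mem_fib_iff H).mp (humem t')])
        (u.strictMono htt)
  have hcomp : ∀ t, w.1 (u t) = w'.1 (u t) :=
    fun t => congrFun (hkey1.trans hkey2.symm) t
  have hxmem : x ∈ fib H i := (mem_fib_iff H).mpr rfl
  have hxr : x ∈ Set.range u := by
    rw [Finset.range_orderEmbOfFin]
    exact hxmem
  obtain ⟨t, ht⟩ := hxr
  rw [← ht]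
  exact hcomp t

lemma psi_surjective (H : Hyp n k c o) : Function.Surjective (psi H) := by
  intro F
  classical
  -- glue the order isomorphisms fiberwise
  set wf : Fin k → Fin n → Fin n := fun i x =>
    if hx : x ∈ fib H i then
      (Finset.univ.filter fun q => F.1 q = i).orderEmbOfFin (F.2 i)
        (((fib H i).orderIsoOfFin (card_fib H i)).symm ⟨x, hx⟩)
    else x with hwf
  set wfun : Fin n → Fin n := fun x => wf (flab H x) x with hwfun
  have hmem : ∀ x, wfun x ∈ Finset.univ.filter fun q => F.1 q = flab H x := by
    intro x
    have hx : x ∈ fib H (flab H x) := (mem_fib_iff H).mpr rfl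
    show wf (flab H x) x ∈ _
    rw [hwf]
    beta_reduce
    rw [dif_pos hx]
    exact Finset.orderEmbOfFin_mem _ _ _
  have hful : ∀ x, F.1 (wfun x) = flab H x :=
    fun x => (Finset.mem_filter.mp (hmem x)).2
  have hinj : Function.Injective wfun := by
    intro x y hxy
    have hij : flab H x = flab H y := by
      rw [← hful x, ← hful y, hxy]
    have hxy' : wf (flab H x) x = wf (flab H x) y := by
      conv_rhs => rw [hij]
      exact hxy
    have hx : x ∈ fib H (flab H x) := (mem_fib_iff H).mpr rfl
    have hy : y ∈ fib H (flab H x) := (mem_fib_iff H).mpr hij.symm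
    rw [hwf] at hxy'
    beta_reduce at hxy'
    rw [dif_pos hx, dif_pos hy] at hxy'
    have h1 := ((Finset.univ.filter fun q => F.1 q = flab H x).orderEmbOfFin
      (F.2 (flab H x))).injective hxy'
    have h2 := (((fib H (flab H x)).orderIsoOfFin (card_fib H (flab H x))).symm).injective h1
    exact congrArg Subtype.val h2
  have hbij : Function.Bijective wfun := Finite.injective_iff_bijective.mp hinj
  set wp : Equiv.Perm (Fin n) := Equiv.ofBijective wfun hbij with hwp
  have hsm : ∀ (i : Fin k) (a b : Fin n), a ∈ fib H i → b ∈ fib H i → a < b →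
      wf i a < wf i b := by
    intro i a b ha hb hab
    have ea : wf i a = ((Finset.univ.filter fun q => F.1 q = i).orderEmbOfFin (F.2 i))
        (((fib H i).orderIsoOfFin (card_fib H i)).symm ⟨a, ha⟩) := by
      rw [hwf]
      beta_reduce
      rw [dif_pos ha]
    have eb : wf i b = ((Finset.univ.filter fun q => F.1 q = i).orderEmbOfFin (F.2 i))
        (((fib H i).orderIsoOfFin (card_fib H i)).symm ⟨b, hb⟩) := by
      rw [hwf]
      beta_reduce
      rw [dif_pos hb]
    rw [ea, eb]
    apply ((Finset.univ.filter fun q => F.1 q = i).orderEmbOfFin (F.2 i)).strictMono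
    apply (((fib H i).orderIsoOfFin (card_fib H i)).symm).strictMono
    exact hab
  have hinc : IncOnArcs H wp := by
    intro x y harc
    have harc' := (isArc_part0_iff H).mp harc
    have hlab : flab H x = flab H y := harc'.2.1
    have hxy : x < y := harc'.1
    have hx : x ∈ fib H (flab H x) := (mem_fib_iff H).mpr rfl
    have hy : y ∈ fib H (flab H x) := (mem_fib_iff H).mpr hlab.symm
    show wf (flab H x) x < wf (flab H y) y
    rw [← hlab]
    exact hsm (flab H x) x y hx hy hxy
  refine ⟨⟨wp, hinc⟩, ?_⟩
  apply Subtype.ext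
  funext q
  show flab H (wp.symm q) = F.1 q
  have : F.1 (wp (wp.symm q)) = flab H (wp.symm q) := hful (wp.symm q)
  rw [Equiv.apply_symm_apply] at this
  exact this.symm

noncomputable def eqv3 (H : Hyp n k c o) :
    {w : Equiv.Perm (Fin n) // IncOnArcs H w} ≃ {f : Fin n → Fin k // FibCond o f} :=
  Equiv.ofBijective (psi H) ⟨psi_injective H, psi_surjective H⟩

end Equivs

end PFAux

theorem card_parkingFunctions_multiset (n k : ℕ) (hn : 1 ≤ n) (hk1 : 1 ≤ k)
    (hk2 : k ≤ n) (c o : Fin k → ℕ)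
    (hc1 : c ⟨0, hk1⟩ = 1) (hc : StrictMono c) (hcn : ∀ i, c i ≤ n)
    (ho : ∀ i, 1 ≤ o i) (hsum : ∑ i, o i = n)
    (hco : ∀ i : Fin k, 0 < (i : ℕ) →
      c i ≤ (∑ j ∈ Finset.univ.filter fun j => j < i, o j) + 1) :
    Nat.card {a : Fin n → ℕ // IsParkingFunction n a ∧
        Finset.univ.val.map a = ∑ i : Fin k, Multiset.replicate (o i) (c i)} =
      Nat.multinomial Finset.univ o ∧
    Nat.card {a : Fin n → ℕ // IsParkingFunction n a ∧
        Finset.univ.val.map a = ∑ i : Fin k, Multiset.replicate (o i) (c i)} =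
      Nat.card {p : Equiv.Perm (Fin n) × Set (Fin n × Fin n) //
        IsAntichainQw n p.1 p.2 ∧
          ∃ π : Finpartition (Finset.univ : Finset (Fin n)), IsNonnesting π ∧
            p.2 = {q : Fin n × Fin n | IsArc π q.1 q.2} ∧
            π.parts.card = k ∧
            ∀ i : Fin k, ∃ B ∈ π.parts, B.card = o i ∧
              ∃ hB : B.Nonempty, (B.min' hB).val + 1 = c i} := by
  have H : PFAux.Hyp n k c o := ⟨hn, hk1, hc1, hc, hcn, ho, hsum, hco⟩
  have e1 : {a : Fin n → ℕ // IsParkingFunction n a ∧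
      Finset.univ.val.map a = ∑ i : Fin k, Multiset.replicate (o i) (c i)}
        ≃ {f : Fin n → Fin k // PFAux.FibCond o f} := PFAux.eqv1 H
  constructor
  · rw [Nat.card_congr e1]
    exact PFAux.card_fibCond k (Fin n) o (by rw [Fintype.card_fin]; exact hsum)
  · exact Nat.card_congr (e1.trans ((PFAux.eqv3 H).symm.trans (PFAux.eqv2 H).symm))
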